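/- (Newton's circle-squaring series at B = R.) The series ∑_{n=0}^∞ 4·(−1)^n·C(1/2,n)/(2n+1) converges and its sum equals π: putting B = R in Newton's quadrature series gives the area of a semicircle, so that π = 4(1 − 1/6 − 1/40 − 1/112 − 5/1152 − ⋯). -/

import Mathlib

open Real

open Polynomial

noncomputable def dd (n : ℕ) : ℝ := (-1) ^ n * Ring.choose ((1 : ℝ) / 2) n

lemma ringChoose_succ (r : ℝ) (n : ℕ) :
    Ring.choose r (n + 1) = Ring.choose r n * (r - n) / (n + 1) := by
  have h1 := Ring.descPochhammer_eq_factorial_smul_choose r (n + 1)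
  have h2 := Ring.descPochhammer_eq_factorial_smul_choose r n
  have hd : (descPochhammer ℤ (n + 1)).smeval r
      = (descPochhammer ℤ n).smeval r * (r - n) := by
    rw [descPochhammer_succ_right, smeval_mul, smeval_sub, smeval_X, smeval_natCast]
    simp
  rw [h1, h2] at hd
  have hfact : ((n + 1).factorial : ℝ) = (n + 1) * n.factorial := by
    rw [Nat.factorial_succ]; push_cast; ring
  field_simp [nsmul_eq_mul] at hd ⊢
  rw [nsmul_eq_mul, nsmul_eq_mul, hfact] at hd
  have hf : (0:ℝ) < (n.factorial : ℝ) := by exact_mod_cast Nat.factorial_pos n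
  nlinarith [hd, hf]

lemma dd_zero : dd 0 = 1 := by simp [dd]

lemma dd_succ (n : ℕ) : dd (n + 1) = dd n * ((n : ℝ) - 1 / 2) / (n + 1) := by
  simp only [dd, ringChoose_succ, pow_succ]
  ring

lemma dd_neg (n : ℕ) : dd (n + 1) < 0 ∧ -dd (n + 1) ≤ 1 / (n + 2) := by
  induction n with
  | zero => norm_num [dd_succ, dd_zero]
  | succ n ih =>
    obtain ⟨h1, h2⟩ := ih
    rw [dd_succ (n + 1)]
    have hn : (0:ℝ) < (n:ℝ) + 2 := by positivity
    constructor
    · apply div_neg_of_neg_of_pos _ (by push_cast; linarith)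
      apply mul_neg_of_neg_of_pos h1 (by push_cast; linarith)
    · push_cast
      rw [show -(dd (n+1) * ((n:ℝ) + 1 - 1/2) / ((n:ℝ)+1+1))
          = (-dd (n+1)) * ((n:ℝ) + 1/2) / ((n:ℝ)+2) by ring,
        div_le_div_iff₀ (by linarith) (by linarith)]
      calc -dd (n+1) * ((n:ℝ) + 1/2) * ((n:ℝ) + 1 + 2)
          ≤ (1/((n:ℝ)+2)) * (((n:ℝ) + 1/2) * ((n:ℝ) + 3)) := by
            rw [mul_assoc]
            have : ((n:ℝ) + 1 + 2) = (n:ℝ) + 3 := by ring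
            rw [this]
            apply mul_le_mul_of_nonneg_right h2 (by nlinarith)
        _ ≤ 1 * ((n:ℝ) + 2) := by
            rw [div_mul_eq_mul_div, one_mul, div_le_iff₀ hn]
            nlinarith

lemma dd_abs (n : ℕ) : |dd n| ≤ 1 / (n + 1) := by
  cases n with
  | zero => simp [dd_zero]
  | succ n =>
    obtain ⟨h1, h2⟩ := dd_neg n
    rw [abs_of_neg h1]
    push_cast
    have : ((n:ℝ) + 1 + 1) = (n:ℝ) + 2 := by ring
    rw [this]
    linarith

lemma dd_abs_le_one (n : ℕ) : |dd n| ≤ 1 := by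
  refine le_trans (dd_abs n) ?_
  rw [div_le_one (by positivity)]
  linarith [Nat.cast_nonneg (α := ℝ) n]

lemma summable_norm_dd {u : ℝ} (h0 : 0 ≤ u) (h1 : u < 1) :
    Summable (fun n => ‖dd n * u ^ n‖) := by
  refine Summable.of_nonneg_of_le (fun n => norm_nonneg _)
    (fun n => ?_) (summable_geometric_of_lt_one h0 h1)
  rw [norm_mul, norm_pow, Real.norm_of_nonneg h0]
  calc ‖dd n‖ * u ^ n ≤ 1 * u ^ n := by
        apply mul_le_mul_of_nonneg_right (dd_abs_le_one n) (by positivity)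
    _ = u ^ n := one_mul _

lemma dd_vandermonde (n : ℕ) :
    ∑ ij ∈ Finset.HasAntidiagonal.antidiagonal n, dd ij.1 * dd ij.2
      = if n = 0 then 1 else if n = 1 then -1 else 0 := by
  have key : Ring.choose ((1:ℝ)/2 + 1/2) n
      = ∑ ij ∈ Finset.HasAntidiagonal.antidiagonal n, Ring.choose ((1:ℝ)/2) ij.1 * Ring.choose ((1:ℝ)/2) ij.2 :=
    Ring.add_choose_eq n (Commute.all _ _)
  have hsum : ∑ ij ∈ Finset.HasAntidiagonal.antidiagonal n, dd ij.1 * dd ij.2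
      = (-1) ^ n * Ring.choose ((1:ℝ)/2 + 1/2) n := by
    rw [key, Finset.mul_sum]
    apply Finset.sum_congr rfl
    intro ij hij
    have hij' : ij.1 + ij.2 = n := Finset.HasAntidiagonal.mem_antidiagonal.mp hij
    rw [dd, dd, ← hij', pow_add]
    ring
  rw [hsum, show (1:ℝ)/2 + 1/2 = ((1:ℕ):ℝ) by norm_num, Ring.choose_natCast]
  match n with
  | 0 => simp
  | 1 => simp
  | (n+2) => simp [Nat.choose_eq_zero_of_lt (show 1 < n + 2 by omega)]

lemma sq_tsum_dd {u : ℝ} (h0 : 0 ≤ u) (h1 : u < 1) :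
    (∑' n, dd n * u ^ n) * (∑' n, dd n * u ^ n) = 1 - u := by
  rw [tsum_mul_tsum_eq_tsum_sum_antidiagonal_of_summable_norm
    (summable_norm_dd h0 h1) (summable_norm_dd h0 h1)]
  have heq : ∀ n : ℕ, ∑ ij ∈ Finset.HasAntidiagonal.antidiagonal n, (dd ij.1 * u ^ ij.1) * (dd ij.2 * u ^ ij.2)
      = (if n = 0 then 1 else if n = 1 then -1 else 0) * u ^ n := by
    intro n
    rw [← dd_vandermonde n, Finset.sum_mul]
    apply Finset.sum_congr rfl
    intro ij hij
    have hij' : ij.1 + ij.2 = n := Finset.HasAntidiagonal.mem_antidiagonal.mp hij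
    rw [← hij', pow_add]
    ring
  rw [tsum_congr heq, tsum_eq_sum (s := {0, 1})
    (by intro b hb; simp only [Finset.mem_insert, Finset.mem_singleton] at hb
        push_neg at hb
        simp [hb.1, hb.2])]
  simp
  ring

lemma tsum_dd_eq_sqrt {u : ℝ} (h0 : 0 ≤ u) (h1 : u < 1) :
    (∑' n, dd n * u ^ n) = Real.sqrt (1 - u) := by
  set F : ℝ → ℝ := fun t => ∑' n, dd n * t ^ n with hF
  have hFsq : ∀ t ∈ Set.Icc 0 u, F t * F t = 1 - t := fun t ht =>
    sq_tsum_dd ht.1 (lt_of_le_of_lt ht.2 h1)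
  have hF0 : F 0 = 1 := by
    rw [hF]
    simp only
    rw [tsum_eq_single 0 (fun b hb => by simp [zero_pow hb])]
    simp [dd_zero]
  have hcont : ContinuousOn F (Set.Icc 0 u) := by
    rw [continuousOn_iff_continuous_restrict]
    apply continuous_tsum (u := fun n => u ^ n)
      (fun n => by continuity) (summable_geometric_of_lt_one h0 h1)
    rintro n ⟨x, hx0, hxu⟩
    simp only [norm_mul, norm_pow, Real.norm_eq_abs]
    calc |dd n| * |x| ^ n ≤ 1 * u ^ n := by
          apply mul_le_mul (dd_abs_le_one n) _ (by positivity) zero_le_one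
          exact pow_le_pow_left₀ (abs_nonneg x) (by rw [abs_of_nonneg hx0]; exact hxu) n
      _ = u ^ n := one_mul _
  have hFu : 0 ≤ F u := by
    by_contra hneg
    push_neg at hneg
    have h01 : (0:ℝ) ∈ Set.Icc (F u) (F 0) := ⟨le_of_lt hneg, by rw [hF0]; norm_num⟩
    obtain ⟨t, ht, hFt⟩ := intermediate_value_Icc' h0 hcont h01
    have := hFsq t ht
    rw [hFt] at this
    have : (1:ℝ) - t = 0 := by linarith
    have : t < 1 := lt_of_le_of_lt ht.2 h1
    linarith
  have : Real.sqrt (1 - u) = F u := by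
    rw [show (1:ℝ) - u = F u ^ 2 by rw [sq]; exact (hFsq u ⟨h0, le_refl u⟩).symm,
      Real.sqrt_sq hFu]
  exact this.symm

lemma hasSum_dd {u : ℝ} (h0 : 0 ≤ u) (h1 : u < 1) :
    HasSum (fun n => dd n * u ^ n) (Real.sqrt (1 - u)) := by
  rw [← tsum_dd_eq_sqrt h0 h1]
  exact ((summable_norm_dd h0 h1).of_norm).hasSum

open MeasureTheory intervalIntegral in
lemma integral_sqrt_Ioc : ∫ x in Set.Ioc (0:ℝ) 1, Real.sqrt (1 - x ^ 2) = π / 4 := by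
  have hcont : Continuous fun x : ℝ => Real.sqrt (1 - x ^ 2) := by continuity
  have hint : ∀ a b : ℝ, IntervalIntegrable (fun x : ℝ => Real.sqrt (1 - x ^ 2)) volume a b :=
    fun a b => hcont.intervalIntegrable a b
  have hneg : ∫ x in (-1:ℝ)..0, Real.sqrt (1 - x ^ 2)
      = ∫ x in (0:ℝ)..1, Real.sqrt (1 - x ^ 2) := by
    have h := intervalIntegral.integral_comp_neg (a := (0:ℝ)) (b := 1)
      (fun x => Real.sqrt (1 - x ^ 2))
    simp only [neg_sq, neg_zero] at h
    rw [← h]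
  have hsplit := intervalIntegral.integral_add_adjacent_intervals
    (a := (-1:ℝ)) (b := 0) (c := 1) (hint _ _) (hint _ _)
      (f := fun x : ℝ => Real.sqrt (1 - x ^ 2))
  rw [integral_sqrt_one_sub_sq] at hsplit
  rw [← intervalIntegral.integral_of_le (by norm_num : (0:ℝ) ≤ 1)]
  linarith [hneg, hsplit]

lemma summable_inv_sq : Summable (fun n : ℕ => 1 / ((n:ℝ) + 1) ^ 2) := by
  have := Real.summable_one_div_nat_pow.mpr (le_refl 2)
  have h2 := (summable_nat_add_iff 1).mpr this
  apply h2.congr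
  intro n
  push_cast
  ring

open MeasureTheory in
lemma hasSum_dd_div : HasSum (fun n : ℕ => dd n / (2 * (n:ℝ) + 1)) (π / 4) := by
  set g : ℕ → ℝ → ℝ := fun n x => dd n * x ^ (2 * n) with hg
  have hgint : ∀ n, IntegrableOn (g n) (Set.Ioc (0:ℝ) 1) volume := by
    intro n
    exact (Continuous.integrableOn_Ioc (by continuity))
  have hgval : ∀ n, ∫ x in Set.Ioc (0:ℝ) 1, g n x = dd n / (2 * (n:ℝ) + 1) := by
    intro n
    rw [← intervalIntegral.integral_of_le (by norm_num : (0:ℝ) ≤ 1), hg]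
    simp only
    rw [intervalIntegral.integral_const_mul, integral_pow]
    push_cast
    ring
  have hgnorm : ∀ n, ∫ x in Set.Ioc (0:ℝ) 1, ‖g n x‖ = |dd n| / (2 * (n:ℝ) + 1) := by
    intro n
    rw [← intervalIntegral.integral_of_le (by norm_num : (0:ℝ) ≤ 1), hg]
    simp only [norm_mul, norm_pow, Real.norm_eq_abs]
    have : ∀ x ∈ Set.uIcc (0:ℝ) 1, |dd n| * |x| ^ (2*n) = |dd n| * x ^ (2*n) := by
      intro x hx
      rw [Set.uIcc_of_le (by norm_num : (0:ℝ) ≤ 1)] at hx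
      rw [abs_of_nonneg hx.1]
    rw [intervalIntegral.integral_congr this, intervalIntegral.integral_const_mul, integral_pow]
    push_cast
    ring
  have hsum_norm : Summable fun n => ∫ x in Set.Ioc (0:ℝ) 1, ‖g n x‖ := by
    apply Summable.of_nonneg_of_le (fun n => by rw [hgnorm]; positivity)
      (fun n => ?_) summable_inv_sq
    rw [hgnorm]
    have h1 : ((n:ℝ) + 1) ^ 2 ≤ ((n:ℝ) + 1) * (2 * n + 1) := by nlinarith [Nat.cast_nonneg (α := ℝ) n]
    calc |dd n| / (2 * (n:ℝ) + 1) ≤ (1 / ((n:ℝ)+1)) / (2 * (n:ℝ) + 1) := by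
          gcongr
          · exact dd_abs n
      _ = 1 / (((n:ℝ)+1) * (2 * n + 1)) := by rw [div_div]
      _ ≤ 1 / ((n:ℝ)+1)^2 := by
          apply div_le_div_of_nonneg_left (by norm_num) (by positivity) h1
  have key := MeasureTheory.hasSum_integral_of_summable_integral_norm
    (μ := volume.restrict (Set.Ioc (0:ℝ) 1)) (fun n => hgint n) hsum_norm
  have htsum : ∫ x in Set.Ioc (0:ℝ) 1, (∑' n, g n x) = π / 4 := by
    rw [← integral_sqrt_Ioc]
    apply integral_congr_ae
    rw [← Measure.restrict_congr_set MeasureTheory.Ioo_ae_eq_Ioc]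
    filter_upwards [ae_restrict_mem measurableSet_Ioo] with x hx
    have hx2 : 0 ≤ x ^ 2 := by positivity
    have hx2' : x ^ 2 < 1 := by nlinarith [hx.1, hx.2]
    have := (hasSum_dd hx2 hx2').tsum_eq
    rw [hg]
    simp only
    calc ∑' n, dd n * x ^ (2 * n) = ∑' n, dd n * (x ^ 2) ^ n := by
          apply tsum_congr; intro n; rw [← pow_mul]
      _ = Real.sqrt (1 - x ^ 2) := this
  rw [htsum] at key
  exact funext hgval ▸ key

/-- Newton's circle-squaring series at B = R: π = 4(1 − 1/6 − 1/40 − 1/112 − ⋯). -/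
theorem newton_circle_squaring_pi :
    HasSum (fun n : ℕ => 4 * (-1 : ℝ) ^ n * Ring.choose ((1 : ℝ) / 2) n / (2 * n + 1)) π := by
  have h := hasSum_dd_div.mul_left 4
  rw [show (4:ℝ) * (π / 4) = π by ring] at h
  have hfn : (fun n : ℕ => 4 * (-1 : ℝ) ^ n * Ring.choose ((1 : ℝ) / 2) n / (2 * n + 1))
      = fun n : ℕ => 4 * (dd n / (2 * (n:ℝ) + 1)) := by
    funext n
    simp only [dd]
    ring
  rw [hfn]
  exact h
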